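/- arXiv:1610.06201 — 3 statements merged into one kernel-verified Lean document; each statement's English description precedes it below -/
import Mathlib

section
/- There exists a real number ε > 0 such that for every x ∈ X and every vector u ∈ E satisfying (1/2)·‖u‖² + V x = k, one has ‖u‖² + ⟪u, θ x⟫ ≥ ε². (In particular the evaluation of the 1-form λ + τ*θ on the Hamiltonian vector field is uniformly bounded below by ε² along the energy level {H = k}.) -/
/-- The core estimate in the proof of Proposition 2.3: under the uniform gap
hypothesis, the evaluation `‖u‖² + ⟪u, θ x⟫` (the contact form applied to the
Hamiltonian vector field) is uniformly bounded below by `ε²` along the energy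
level `{(1/2)‖u‖² + V x = k}`. -/
theorem stmt_1
    {E : Type*} [NormedAddCommGroup E] [InnerProductSpace ℝ E]
    {X : Type*} [Nonempty X]
    (V : X → ℝ) (hV : BddBelow (Set.range V))
    (θ : X → E) (k δ : ℝ) (hδ : 0 < δ)
    (hgap : ∀ x : X, (1 / 2) * ‖θ x‖ ^ 2 + V x ≤ k - δ) :
    ∃ ε : ℝ, 0 < ε ∧ ∀ x : X, ∀ u : E,
      (1 / 2) * ‖u‖ ^ 2 + V x = k →
      ‖u‖ ^ 2 + inner ℝ u (θ x) ≥ ε ^ 2 := by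
  refine ⟨Real.sqrt δ, Real.sqrt_pos.mpr hδ, fun x u hu => ?_⟩
  have hsq : Real.sqrt δ ^ 2 = δ := Real.sq_sqrt hδ.le
  have h1 : -(‖u‖ * ‖θ x‖) ≤ inner ℝ u (θ x) := by
    have := abs_real_inner_le_norm u (θ x)
    cases abs_le.mp this with
    | intro h _ => linarith
  have h2 := hgap x
  nlinarith [sq_nonneg (‖u‖ - ‖θ x‖), norm_nonneg u, norm_nonneg (θ x)]
end

section
/- For every x ∈ U, the function f is differentiable at x and its Fréchet derivative at x equals θ x; that is, f is a primitive of the closed 1-form θ on U. -/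
open intervalIntegral

set_option maxHeartbeats 1000000 in
set_option synthInstance.maxHeartbeats 400000 in
open Metric Set MeasureTheory ContinuousLinearMap in
/-- The Poincaré lemma on a star-shaped open set (used in the proofs of
Lemma 2.5 and Lemma 2.2): if `θ` is a closed `C¹` 1-form on an open set `U`
star-shaped with respect to the origin, then the radial formula
`f x = ∫₀¹ θ(t • x)(x) dt` defines a primitive of `θ` on `U`, i.e. `f` is
differentiable at every `x ∈ U` with Fréchet derivative `θ x`. -/
theorem stmt_2
    {E : Type*} [NormedAddCommGroup E] [NormedSpace ℝ E]
    (U : Set E) (hU : IsOpen U)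
    (hstar : ∀ x ∈ U, ∀ t ∈ Set.Icc (0 : ℝ) 1, t • x ∈ U)
    (θ : E → (E →L[ℝ] ℝ))
    (hθdiff : ContDiffOn ℝ 1 θ U)
    (hθclosed : ∀ x ∈ U, ∀ u v : E, fderiv ℝ θ x u v = fderiv ℝ θ x v u)
    (f : E → ℝ)
    (hf : ∀ x ∈ U, f x = ∫ t in (0 : ℝ)..1, θ (t • x) x) :
    ∀ x ∈ U, HasFDerivAt f (θ x) x := by
  intro x hx
  have hdiff : ∀ z ∈ U, DifferentiableAt ℝ θ z := fun z hz =>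
    (hθdiff.contDiffAt (hU.mem_nhds hz)).differentiableAt one_ne_zero
  have hcont : ContinuousOn θ U := hθdiff.continuousOn
  have hfcont : ContinuousOn (fderiv ℝ θ) U :=
    hθdiff.continuousOn_fderiv_of_isOpen hU le_rfl
  have hφ : Continuous (fun p : ℝ × E => p.1 • p.2) := continuous_fst.smul continuous_snd
  set S : Set (ℝ × E) := (fun p : ℝ × E => p.1 • p.2) ⁻¹' U with hS
  have hSopen : IsOpen S := hU.preimage hφ
  have hKS : (Set.Icc (0:ℝ) 1) ×ˢ ({x} : Set E) ⊆ S := by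
    rintro ⟨t, y⟩ ⟨ht, hy⟩
    have hyx : y = x := hy
    rw [hyx]
    exact hstar x hx t ht
  set ψ : ℝ × E → ℝ := fun p => ‖θ (p.1 • p.2)‖ + ‖fderiv ℝ θ (p.1 • p.2)‖ with hψ
  have hψcont : ContinuousOn ψ S :=
    ((hcont.comp hφ.continuousOn (fun p hp => hp)).norm).add
      (ContinuousOn.norm (E := E →L[ℝ] E →L[ℝ] ℝ) (hfcont.comp hφ.continuousOn (fun p hp => hp)))
  obtain ⟨C, hC⟩ : ∃ C, ∀ p ∈ (Set.Icc (0:ℝ) 1) ×ˢ ({x} : Set E), ψ p ≤ C := by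
    obtain ⟨C, hC⟩ := ((isCompact_Icc.prod isCompact_singleton).bddAbove_image
      (hψcont.mono hKS))
    exact ⟨C, fun p hp => hC (Set.mem_image_of_mem _ hp)⟩
  set W : Set (ℝ × E) := S ∩ ψ ⁻¹' (Set.Iio (C + 1)) with hW
  have hWopen : IsOpen W := hψcont.isOpen_inter_preimage hSopen isOpen_Iio
  have hKW : (Set.Icc (0:ℝ) 1) ×ˢ ({x} : Set E) ⊆ W := fun p hp =>
    ⟨hKS hp, lt_of_le_of_lt (hC p hp) (lt_add_one C)⟩
  obtain ⟨u, v, huo, hvo, hsu, htv, huv⟩ :=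
    generalized_tube_lemma isCompact_Icc isCompact_singleton hWopen hKW
  obtain ⟨δ, hδpos, hδ⟩ := Metric.isOpen_iff.1 (hvo.inter hU) x ⟨htv rfl, hx⟩
  have hball : ∀ t ∈ Set.Icc (0:ℝ) 1, ∀ y ∈ ball x δ, (t, y) ∈ W := fun t ht y hy =>
    huv ⟨hsu ht, (hδ hy).1⟩
  have hballU : ball x δ ⊆ U := fun y hy => (hδ hy).2
  have hmem : ∀ t ∈ Set.Icc (0:ℝ) 1, ∀ y ∈ ball x δ, t • y ∈ U := fun t ht y hy =>
    (hball t ht y hy).1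
  have hbd : ∀ t ∈ Set.Icc (0:ℝ) 1, ∀ y ∈ ball x δ,
      ‖θ (t • y)‖ + ‖fderiv ℝ θ (t • y)‖ < C + 1 := fun t ht y hy =>
    (hball t ht y hy).2
  have hIsub : Set.uIoc (0:ℝ) 1 ⊆ Set.Icc (0:ℝ) 1 := by
    rw [Set.uIoc_of_le zero_le_one]
    exact Set.Ioc_subset_Icc_self
  have hxball : x ∈ ball x δ := mem_ball_self hδpos
  -- the parametric derivative
  set F' : E → ℝ → E →L[ℝ] ℝ :=
    fun y t => θ (t • y) + t • ((fderiv ℝ θ (t • y)).flip y) with hF'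
  -- continuity in t of both F and F' along the segment over y ∈ ball x δ
  have hFcontOn : ∀ y ∈ ball x δ, ContinuousOn (fun t : ℝ => θ (t • y) y) (Set.Icc 0 1) := by
    intro y hy
    exact (hcont.comp (by fun_prop) (fun t ht => hmem t ht y hy)).clm_apply continuousOn_const
  have hF'contOn : ∀ y ∈ ball x δ, ContinuousOn (F' y) (Set.Icc 0 1) := by
    intro y hy
    have h1 : ContinuousOn (fun t : ℝ => θ (t • y)) (Set.Icc 0 1) :=
      hcont.comp (by fun_prop) (fun t ht => hmem t ht y hy)
    have h2 : ContinuousOn (fun t : ℝ => fderiv ℝ θ (t • y)) (Set.Icc 0 1) :=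
      hfcont.comp (by fun_prop) (fun t ht => hmem t ht y hy)
    have h3 : ContinuousOn (fun t : ℝ => (fderiv ℝ θ (t • y)).flip) (Set.Icc 0 1) :=
      (ContinuousLinearMap.flipₗᵢ ℝ E E ℝ).continuous.comp_continuousOn h2
    exact h1.add (continuousOn_id.smul (h3.clm_apply continuousOn_const))
  -- differentiability in y
  have h_diff : ∀ t ∈ Set.uIoc (0:ℝ) 1, ∀ y ∈ ball x δ,
      HasFDerivAt (fun z => θ (t • z) z) (F' y t) y := by
    intro t ht y hy
    have htI := hIsub ht
    have hty : t • y ∈ U := hmem t htI y hy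
    have h1 : HasFDerivAt (fun z : E => t • z) (t • ContinuousLinearMap.id ℝ E) y :=
      (hasFDerivAt_id y).const_smul t
    have h2 : HasFDerivAt (fun z : E => θ (t • z))
        ((fderiv ℝ θ (t • y)).comp (t • ContinuousLinearMap.id ℝ E)) y :=
      ((hdiff _ hty).hasFDerivAt).comp y h1
    have h3 : HasFDerivAt (fun z => θ (t • z) z) (_ : E →L[ℝ] ℝ) y := h2.clm_apply (hasFDerivAt_id y)
    convert h3 using 1
    ext v
    simp [hF', ContinuousLinearMap.flip_apply, mul_comm]
  -- the bound
  have h_bound : ∀ t ∈ Set.uIoc (0:ℝ) 1, ∀ y ∈ ball x δ,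
      ‖F' y t‖ ≤ (C + 1) * (1 + (‖x‖ + δ)) := by
    intro t ht y hy
    have htI := hIsub ht
    have hb := hbd t htI y hy
    have hθb : ‖θ (t • y)‖ ≤ C + 1 :=
      le_of_lt (lt_of_le_of_lt (le_add_of_nonneg_right (@norm_nonneg (E →L[ℝ] E →L[ℝ] ℝ) _ _)) hb)
    have hfb : ‖fderiv ℝ θ (t • y)‖ ≤ C + 1 :=
      le_of_lt (lt_of_le_of_lt (le_add_of_nonneg_left (norm_nonneg _)) hb)
    have hyn : ‖y‖ ≤ ‖x‖ + δ := by
      have h1 := mem_ball_iff_norm.1 hy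
      have h2 := norm_sub_norm_le y x
      linarith
    have ht0 : |t| ≤ 1 := by
      rw [abs_le]; exact ⟨le_trans (by norm_num) htI.1, htI.2⟩
    calc ‖F' y t‖ ≤ ‖θ (t • y)‖ + ‖t • ((fderiv ℝ θ (t • y)).flip y)‖ := norm_add_le _ _
      _ ≤ (C + 1) + |t| * (‖(fderiv ℝ θ (t • y)).flip‖ * ‖y‖) := by
          rw [norm_smul, Real.norm_eq_abs]
          exact add_le_add hθb (mul_le_mul_of_nonneg_left
            ((fderiv ℝ θ (t • y)).flip.le_opNorm y) (abs_nonneg t))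
      _ ≤ (C + 1) + 1 * ((C + 1) * (‖x‖ + δ)) := by
          rw [ContinuousLinearMap.opNorm_flip]
          have h0C : (0:ℝ) ≤ C + 1 := le_trans (norm_nonneg _) hθb
          have h0y : (0:ℝ) ≤ ‖y‖ := norm_nonneg _
          have h0f : (0:ℝ) ≤ ‖fderiv ℝ θ (t • y)‖ := @norm_nonneg (E →L[ℝ] E →L[ℝ] ℝ) _ _
          have h0x : (0:ℝ) ≤ ‖x‖ + δ := le_trans h0y hyn
          have habs : (0:ℝ) ≤ |t| := abs_nonneg t
          linarith [mul_le_mul ht0 (mul_le_mul hfb hyn h0y h0C) (mul_nonneg h0f h0y) zero_le_one]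
      _ = (C + 1) * (1 + (‖x‖ + δ)) := by ring
  -- apply the parametric differentiation theorem
  have key : HasFDerivAt (fun y => ∫ t in (0:ℝ)..1, θ (t • y) y)
      (∫ t in (0:ℝ)..1, F' x t) x := by
    apply intervalIntegral.hasFDerivAt_integral_of_dominated_of_fderiv_le
      (F' := F') (bound := fun _ => (C + 1) * (1 + (‖x‖ + δ))) (Metric.ball_mem_nhds x hδpos)
    · filter_upwards [Metric.ball_mem_nhds x hδpos] with y hy
      exact ((hFcontOn y hy).mono hIsub).aestronglyMeasurable measurableSet_uIoc
    · exact ((hFcontOn x hxball).mono (by rw [Set.uIcc_of_le zero_le_one])).intervalIntegrable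
    · exact ((hF'contOn x hxball).mono hIsub).aestronglyMeasurable measurableSet_uIoc
    · exact Filter.Eventually.of_forall h_bound
    · exact intervalIntegrable_const
    · exact Filter.Eventually.of_forall h_diff
  -- compute the integral of F' x via FTC
  have hFTC : ∀ t ∈ Set.uIcc (0:ℝ) 1,
      HasDerivAt (fun s : ℝ => s • θ (s • x)) (F' x t) t := by
    intro t ht
    rw [Set.uIcc_of_le zero_le_one] at ht
    have htx : t • x ∈ U := hstar x hx t ht
    have h2 : HasDerivAt (fun s : ℝ => s • x) x t := by
      simpa using (hasDerivAt_id t).smul_const x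
    have h3 : HasDerivAt (fun s : ℝ => θ (s • x)) (fderiv ℝ θ (t • x) x) t :=
      ((hdiff _ htx).hasFDerivAt).comp_hasDerivAt t h2
    have h4 : HasDerivAt (fun s : ℝ => s • θ (s • x)) _ t := (hasDerivAt_id t).smul h3
    convert h4 using 1
    ext v
    simp [hF', ContinuousLinearMap.flip_apply, hθclosed _ htx]
    ring
  have hint : IntervalIntegrable (F' x) volume 0 1 :=
    ((hF'contOn x hxball).mono (by rw [Set.uIcc_of_le zero_le_one])).intervalIntegrable
  have hval : (∫ t in (0:ℝ)..1, F' x t) = θ x := by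
    rw [intervalIntegral.integral_eq_sub_of_hasDerivAt hFTC hint]
    simp
  rw [hval] at key
  -- transfer from the integral function to f
  apply key.congr_of_eventuallyEq
  filter_upwards [hU.mem_nhds hx] with y hy
  exact hf y hy
end

section
/- For every natural number n ≥ 1 there exists a constant K > 0 with the following property: for every C > 0, every open set U ⊆ ℝⁿ containing the closed unit ball, and every closed C¹ 1-form θ : U → (ℝⁿ →L[ℝ] ℝ) satisfying ‖θ y‖ ≤ C for all y in the closed unit ball, there exists a C² function g : ℝⁿ → ℝ whose support is contained in the open unit ball, such that the modified 1-form θ̂ := θ + dg (defined on U, where dg is the Fréchet derivative of g) satisfies θ̂(x) = 0 for every x with ‖x‖ ≤ 1/2, and ‖θ̂(y)‖ ≤ K·C for every y in the closed unit ball. -/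
open Metric MeasureTheory intervalIntegral Set

lemma poincare_ball {E : Type*} [NormedAddCommGroup E] [NormedSpace ℝ E] [FiniteDimensional ℝ E]
    {r : ℝ} (θ : E → E →L[ℝ] ℝ) (hθ : ContDiffOn ℝ 1 θ (ball (0:E) r))
    (hsym : ∀ x ∈ ball (0:E) r, ∀ u v, fderiv ℝ θ x u v = fderiv ℝ θ x v u)
    {x₀ : E} (hx₀ : x₀ ∈ ball (0:E) r) :
    HasFDerivAt (fun x => ∫ t in (0:ℝ)..1, θ (t • x) x) (θ x₀) x₀ := by
  have hVo : IsOpen (ball (0:E) r) := isOpen_ball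
  have hmem : ∀ x ∈ ball (0:E) r, ∀ t : ℝ, |t| ≤ 1 → t • x ∈ ball (0:E) r := by
    intro x hx t ht
    rw [mem_ball_zero_iff] at hx ⊢
    calc ‖t • x‖ = |t| * ‖x‖ := by rw [norm_smul, Real.norm_eq_abs]
    _ ≤ 1 * ‖x‖ := by gcongr
    _ < r := by simpa using hx
  have hdiff : ∀ y ∈ ball (0:E) r, DifferentiableAt ℝ θ y := fun y hy =>
    (hθ.differentiableOn one_ne_zero).differentiableAt (hVo.mem_nhds hy)
  have hcont : ContinuousOn θ (ball (0:E) r) := hθ.continuousOn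
  have hcont' : ContinuousOn (fderiv ℝ θ) (ball (0:E) r) :=
    hθ.continuousOn_fderiv_of_isOpen hVo le_rfl
  set F' : E → ℝ → E →L[ℝ] ℝ := fun x t => θ (t • x) + t • ((fderiv ℝ θ (t • x)) x)
    with hF'def
  -- choose δ
  have hx₀n : ‖x₀‖ < r := mem_ball_zero_iff.mp hx₀
  set δ : ℝ := (r - ‖x₀‖) / 2 with hδdef
  have hδpos : 0 < δ := by rw [hδdef]; linarith
  have hsr : ‖x₀‖ + δ < r := by simp only [hδdef]; linarith
  have hball : ∀ x ∈ ball x₀ δ, ∀ t : ℝ, |t| ≤ 1 → t • x ∈ ball (0:E) r := by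
    intro x hx t ht
    apply hmem x _ t ht
    rw [mem_ball_zero_iff]
    calc ‖x‖ ≤ ‖x₀‖ + δ := by
          have := mem_ball_iff_norm.mp hx
          have h2 : ‖x‖ - ‖x₀‖ ≤ ‖x - x₀‖ := norm_sub_norm_le x x₀
          linarith
    _ < r := hsr
  -- compact bounds
  have hScpt : IsCompact (closedBall (0:E) (‖x₀‖ + δ)) := isCompact_closedBall _ _
  have hSsub : closedBall (0:E) (‖x₀‖ + δ) ⊆ ball (0:E) r := closedBall_subset_ball hsr
  have hSmem : ∀ x ∈ ball x₀ δ, ∀ t : ℝ, |t| ≤ 1 → t • x ∈ closedBall (0:E) (‖x₀‖ + δ) := by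
    intro x hx t ht
    rw [mem_closedBall_zero_iff]
    have h2 : ‖x‖ - ‖x₀‖ ≤ ‖x - x₀‖ := norm_sub_norm_le x x₀
    have h3 := mem_ball_iff_norm.mp hx
    calc ‖t • x‖ = |t| * ‖x‖ := by rw [norm_smul, Real.norm_eq_abs]
    _ ≤ 1 * ‖x‖ := by
        have : 0 ≤ ‖x‖ := norm_nonneg x
        nlinarith
    _ ≤ ‖x₀‖ + δ := by linarith
  obtain ⟨M₁, hM₁⟩ := hScpt.exists_bound_of_continuousOn (hcont.mono hSsub)
  obtain ⟨M₂, hM₂⟩ := hScpt.exists_bound_of_continuousOn (f := fderiv ℝ θ) (hcont'.mono hSsub)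
  have hM₁0 : 0 ≤ M₁ := le_trans (norm_nonneg _) (hM₁ 0 (mem_closedBall_self (by positivity)))
  have hM₂0 : 0 ≤ M₂ := le_trans (norm_nonneg _) (hM₂ 0 (mem_closedBall_self (by positivity)))
  have habs : ∀ t ∈ Set.uIoc (0:ℝ) 1, |t| ≤ 1 := by
    intro t ht
    rw [Set.uIoc_of_le (by norm_num : (0:ℝ) ≤ 1)] at ht
    rw [abs_le]; constructor <;> [linarith [ht.1]; exact ht.2]
  -- derivative of integrand
  have hder : ∀ t : ℝ, |t| ≤ 1 → ∀ x ∈ ball x₀ δ,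
      HasFDerivAt (fun x => θ (t • x) x) (F' x t) x := by
    intro t ht x hx
    have htx : t • x ∈ ball (0:E) r := hball x hx t ht
    have hc : HasFDerivAt (fun y : E => θ (t • y))
        ((fderiv ℝ θ (t • x)).comp (t • ContinuousLinearMap.id ℝ E)) x := by
      have h1 : HasFDerivAt (fun y : E => t • y) (t • ContinuousLinearMap.id ℝ E) x :=
        (hasFDerivAt_id x).const_smul t
      exact ((hdiff _ htx).hasFDerivAt).comp x h1
    have hu : HasFDerivAt (fun y : E => y) (ContinuousLinearMap.id ℝ E) x := hasFDerivAt_id x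
    have := hc.clm_apply hu
    refine this.congr_fderiv ?_
    symm
    ext h
    simp only [hF'def, ContinuousLinearMap.add_apply, ContinuousLinearMap.coe_comp',
      Function.comp_apply, ContinuousLinearMap.flip_apply, ContinuousLinearMap.coe_id',
      id_eq, ContinuousLinearMap.smul_apply, ContinuousLinearMap.coe_smul']
    simp only [Pi.smul_apply, id_eq, smul_eq_mul]
    rw [hsym (t • x) htx (t • h) x, (fderiv ℝ θ (t • x) x).map_smul]
    simp
  have key := intervalIntegral.hasFDerivAt_integral_of_dominated_of_fderiv_le
    (F := fun x t => θ (t • x) x) (F' := F') (x₀ := x₀) (a := (0:ℝ)) (b := 1)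
    (μ := volume) (bound := fun _ => M₁ + M₂ * (‖x₀‖ + δ)) (ball_mem_nhds x₀ hδpos)
    ?_ ?_ ?_ ?_ ?_ ?_
  · refine key.congr_fderiv ?_
    symm
    -- ∫ F' x₀ t = θ x₀ via FTC
    have hFTC : ∀ t ∈ uIcc (0:ℝ) 1,
        HasDerivAt (fun s : ℝ => s • θ (s • x₀)) (F' x₀ t) t := by
      intro t ht
      rw [uIcc_of_le (by norm_num : (0:ℝ) ≤ 1)] at ht
      have ht1 : |t| ≤ 1 := by rw [abs_le]; exact ⟨by linarith [ht.1], ht.2⟩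
      have htx : t • x₀ ∈ ball (0:E) r := hmem x₀ hx₀ t ht1
      have hg : HasDerivAt (fun s : ℝ => θ (s • x₀)) (fderiv ℝ θ (t • x₀) x₀) t := by
        have h1 : HasDerivAt (fun s : ℝ => s • x₀) x₀ t := by
          simpa using (hasDerivAt_id t).smul_const x₀
        exact ((hdiff _ htx).hasFDerivAt).comp_hasDerivAt t h1
      have := (hasDerivAt_id t).smul hg
      refine this.congr_deriv ?_
      symm
      simp only [hF'def, one_smul, id_eq]
      abel
    have hFcont : ContinuousOn (F' x₀) (uIcc (0:ℝ) 1) := by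
      rw [uIcc_of_le (by norm_num : (0:ℝ) ≤ 1)]
      have hmap : MapsTo (fun t : ℝ => t • x₀) (Icc (0:ℝ) 1) (ball (0:E) r) := by
        intro t ht
        exact hmem x₀ hx₀ t (by rw [abs_le]; exact ⟨by linarith [ht.1], ht.2⟩)
      have hsm : ContinuousOn (fun t : ℝ => t • x₀) (Icc (0:ℝ) 1) :=
        (continuous_id.smul continuous_const).continuousOn
      apply ContinuousOn.add
      · exact hcont.comp hsm hmap
      · exact continuousOn_id.smul (((hcont'.comp hsm hmap).clm_apply continuousOn_const))
    rw [intervalIntegral.integral_eq_sub_of_hasDerivAt hFTC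
      (hFcont.intervalIntegrable_of_Icc (by norm_num) |>.mono_set (by rw [uIcc_of_le] <;> norm_num))]
    simp
  · -- hF_meas
    filter_upwards [ball_mem_nhds x₀ hδpos] with x hx
    apply ContinuousOn.aestronglyMeasurable _ measurableSet_uIoc
    have hmap : MapsTo (fun t : ℝ => t • x) (Set.uIoc (0:ℝ) 1) (ball (0:E) r) := fun t ht =>
      hball x hx t (habs t ht)
    exact ((hcont.comp ((continuous_id.smul continuous_const).continuousOn) hmap).clm_apply
      continuousOn_const)
  · -- hF_int
    apply ContinuousOn.intervalIntegrable
    rw [uIcc_of_le (by norm_num : (0:ℝ) ≤ 1)]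
    have hmap : MapsTo (fun t : ℝ => t • x₀) (Icc (0:ℝ) 1) (ball (0:E) r) := fun t ht =>
      hmem x₀ hx₀ t (by rw [abs_le]; exact ⟨by linarith [ht.1], ht.2⟩)
    exact ((hcont.comp ((continuous_id.smul continuous_const).continuousOn) hmap).clm_apply
      continuousOn_const)
  · -- hF'_meas
    have hmap : MapsTo (fun t : ℝ => t • x₀) (Set.uIoc (0:ℝ) 1) (ball (0:E) r) := fun t ht =>
      hmem x₀ hx₀ t (habs t ht)
    have hsm : ContinuousOn (fun t : ℝ => t • x₀) (Set.uIoc (0:ℝ) 1) :=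
      (continuous_id.smul continuous_const).continuousOn
    have hFc : ContinuousOn (F' x₀) (Set.uIoc (0:ℝ) 1) := (hcont.comp hsm hmap).add
      (continuousOn_id.smul (((hcont'.comp hsm hmap).clm_apply continuousOn_const)))
    exact hFc.aestronglyMeasurable measurableSet_uIoc
  · -- h_bound
    filter_upwards with t
    intro ht x hx
    have ht1 := habs t ht
    have htS := hSmem x hx t ht1
    have hxn : ‖x‖ ≤ ‖x₀‖ + δ := mem_closedBall_zero_iff.mp (by simpa using hSmem x hx 1 (by norm_num))
    calc ‖F' x t‖ ≤ ‖θ (t • x)‖ + ‖t • (fderiv ℝ θ (t • x)) x‖ := norm_add_le _ _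
    _ ≤ M₁ + M₂ * (‖x₀‖ + δ) := by
        gcongr
        · exact hM₁ _ htS
        · rw [norm_smul t ((fderiv ℝ θ (t • x)) x), Real.norm_eq_abs]
          calc |t| * ‖(fderiv ℝ θ (t • x)) x‖ ≤ 1 * (‖fderiv ℝ θ (t • x)‖ * ‖x‖) := by
                gcongr; exact (fderiv ℝ θ (t • x)).le_opNorm x
          _ ≤ M₂ * (‖x₀‖ + δ) := by
              rw [one_mul]
              exact mul_le_mul (hM₂ _ htS) hxn (norm_nonneg x) hM₂0
  · -- bound integrable
    exact intervalIntegrable_const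
  · -- h_diff
    filter_upwards with t
    intro ht x hx
    exact hder t (habs t ht) x hx

set_option maxHeartbeats 1000000 in
/-- The analytic content of Lemma 2.5: a bounded closed 1-form `θ` on a
neighbourhood of the closed unit ball in `ℝⁿ` can be modified by adding the
differential of a `C²` function `g` supported in the open unit ball so that
the modified 1-form `θ̂ = θ + dg` vanishes on the ball of radius `1/2` and is
still bounded on the closed unit ball by `K · C`, where `K` depends only on
the dimension. -/
theorem stmt_4 (n : ℕ) (hn : 1 ≤ n) :
    ∃ K : ℝ, 0 < K ∧
      ∀ C : ℝ, 0 < C →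
      ∀ U : Set (EuclideanSpace ℝ (Fin n)), IsOpen U →
        Metric.closedBall (0 : EuclideanSpace ℝ (Fin n)) 1 ⊆ U →
      ∀ θ : EuclideanSpace ℝ (Fin n) → (EuclideanSpace ℝ (Fin n) →L[ℝ] ℝ),
        ContDiffOn ℝ 1 θ U →
        (∀ x ∈ U, ∀ u v : EuclideanSpace ℝ (Fin n),
          fderiv ℝ θ x u v = fderiv ℝ θ x v u) →
        (∀ y ∈ Metric.closedBall (0 : EuclideanSpace ℝ (Fin n)) 1, ‖θ y‖ ≤ C) →
        ∃ g : EuclideanSpace ℝ (Fin n) → ℝ,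
          ContDiff ℝ 2 g ∧
          tsupport g ⊆ Metric.ball (0 : EuclideanSpace ℝ (Fin n)) 1 ∧
          (∀ x : EuclideanSpace ℝ (Fin n), ‖x‖ ≤ 1 / 2 →
            θ x + fderiv ℝ g x = 0) ∧
          (∀ y ∈ Metric.closedBall (0 : EuclideanSpace ℝ (Fin n)) 1,
            ‖θ y + fderiv ℝ g y‖ ≤ K * C) := by
  set E := EuclideanSpace ℝ (Fin n) with hEdef
  -- the bump function, fixed once and for all (depends only on `n`)
  let χ : ContDiffBump (0 : E) := ⟨3/5, 3/4, by norm_num, by norm_num⟩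
  have hχsm : ContDiff ℝ 2 (⇑χ) := χ.contDiff
  have hχcs : HasCompactSupport (⇑χ) := χ.hasCompactSupport
  obtain ⟨M, hM⟩ : ∃ M : ℝ, ∀ y : E, ‖fderiv ℝ (⇑χ) y‖ ≤ M :=
    (hχsm.continuous_fderiv (by norm_num)).bounded_above_of_compact_support
      (HasCompactSupport.fderiv (𝕜 := ℝ) hχcs)
  have hM0 : 0 ≤ M := le_trans (norm_nonneg _) (hM 0)
  refine ⟨1 + M, by linarith, ?_⟩
  intro C hC U hU hUb θ hθ hsym hbd
  -- enlarge the closed unit ball inside `U`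
  obtain ⟨ε, hε, hsubU⟩ := (isCompact_closedBall (0:E) 1).exists_cthickening_subset_open hU hUb
  rw [cthickening_closedBall hε.le (by norm_num) (0:E)] at hsubU
  set r : ℝ := ε + 1 with hrdef
  have hr1 : 1 < r := by rw [hrdef]; linarith
  have hballU : Metric.ball (0:E) r ⊆ U := (Metric.ball_subset_closedBall).trans hsubU
  have hθV : ContDiffOn ℝ 1 θ (Metric.ball (0:E) r) := hθ.mono hballU
  have hsymV : ∀ x ∈ Metric.ball (0:E) r, ∀ u v : E,
      fderiv ℝ θ x u v = fderiv ℝ θ x v u := fun x hx => hsym x (hballU hx)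
  -- the local potential
  set f : E → ℝ := fun x => ∫ t in (0:ℝ)..1, θ (t • x) x with hfdef
  have hf : ∀ x ∈ Metric.ball (0:E) r, HasFDerivAt f (θ x) x := fun x hx =>
    poincare_ball θ hθV hsymV hx
  have hfC2 : ContDiffOn ℝ 2 f (Metric.ball (0:E) r) := by
    have h2 : (2 : WithTop ℕ∞) = (1 : WithTop ℕ∞) + 1 := by norm_num
    rw [h2, contDiffOn_succ_iff_fderiv_of_isOpen Metric.isOpen_ball]
    refine ⟨fun x hx => (hf x hx).differentiableAt.differentiableWithinAt, ?_, ?_⟩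
    · intro h; exact absurd h (by simp)
    · exact hθV.congr fun x hx => (hf x hx).fderiv
  -- the cut-off potential
  refine ⟨fun x => -(χ x * f x), ?_, ?_, ?_, ?_⟩
  · -- C²
    rw [contDiff_iff_contDiffAt]
    intro x
    by_cases hx : x ∈ Metric.ball (0:E) r
    · exact ((hχsm.contDiffAt).mul
        ((hfC2.contDiffAt (Metric.isOpen_ball.mem_nhds hx)))).neg
    · have hxs : x ∉ tsupport (⇑χ) := by
        rw [χ.tsupport_eq, show χ.rOut = 3/4 from rfl]
        intro hmem
        apply hx
        exact Metric.closedBall_subset_ball (by linarith) hmem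
      have hnb : (tsupport (⇑χ))ᶜ ∈ nhds x :=
        (isClosed_tsupport _).isOpen_compl.mem_nhds hxs
      apply (contDiffAt_const (c := (0:ℝ))).congr_of_eventuallyEq
      filter_upwards [hnb] with y hy
      simp [image_eq_zero_of_notMem_tsupport hy]
  · -- support
    have hsupp : Function.support (fun x => -(χ x * f x)) ⊆ tsupport (⇑χ) := by
      intro x hx
      by_contra hxs
      exact hx (by simp [image_eq_zero_of_notMem_tsupport hxs])
    refine (closure_minimal hsupp (isClosed_tsupport _)).trans ?_
    rw [χ.tsupport_eq, show χ.rOut = 3/4 from rfl]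
    exact Metric.closedBall_subset_ball (by norm_num)
  · -- vanishing on the half ball
    intro x hx
    have hxr : x ∈ Metric.ball (0:E) r := by
      rw [Metric.mem_ball, dist_zero_right]; linarith
    have hχ1 : HasFDerivAt (⇑χ) (0 : E →L[ℝ] ℝ) x := by
      apply (hasFDerivAt_const (1:ℝ) x).congr_of_eventuallyEq
      filter_upwards [Metric.isOpen_ball.mem_nhds
        (show x ∈ Metric.ball (0:E) (3/5) by rw [Metric.mem_ball, dist_zero_right]; linarith)]
        with y hy
      refine χ.one_of_mem_closedBall (Metric.ball_subset_closedBall ?_)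
      rw [show χ.rIn = 3/5 from rfl]
      exact hy
    have hχx1 : χ x = 1 := χ.one_of_mem_closedBall
      (by rw [Metric.mem_closedBall, dist_zero_right, show χ.rIn = 3/5 from rfl]; linarith)
    have hgd : HasFDerivAt (fun x => -(χ x * f x)) (-(χ x • θ x + f x • (0 : E →L[ℝ] ℝ))) x :=
      (hχ1.mul (hf x hxr)).neg
    rw [hgd.fderiv, hχx1]
    simp
  · -- bound
    intro y hy
    have hyn : ‖y‖ ≤ 1 := by rwa [Metric.mem_closedBall, dist_zero_right] at hy
    have hyr : y ∈ Metric.ball (0:E) r := by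
      rw [Metric.mem_ball, dist_zero_right]; linarith
    have hχd : HasFDerivAt (⇑χ) (fderiv ℝ (⇑χ) y) y :=
      ((hχsm.differentiable (by norm_num)) y).hasFDerivAt
    have hgd : HasFDerivAt (fun x => -(χ x * f x))
        (-(χ y • θ y + f y • fderiv ℝ (⇑χ) y)) y := (hχd.mul (hf y hyr)).neg
    rw [hgd.fderiv]
    have hfb : |f y| ≤ C := by
      have := intervalIntegral.norm_integral_le_of_norm_le_const
        (C := C) (f := fun t => θ (t • y) y) (a := 0) (b := 1) ?_
      · rw [Real.norm_eq_abs] at this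
        simpa using this
      · intro t ht
        rw [Set.uIoc_of_le (by norm_num : (0:ℝ) ≤ 1)] at ht
        have hty : t • y ∈ Metric.closedBall (0:E) 1 := by
          rw [Metric.mem_closedBall, dist_zero_right, norm_smul, Real.norm_eq_abs,
            abs_of_pos ht.1]
          calc t * ‖y‖ ≤ 1 * 1 := by
                apply mul_le_mul ht.2 hyn (norm_nonneg y) (by norm_num)
          _ = 1 := by norm_num
        calc ‖θ (t • y) y‖ ≤ ‖θ (t • y)‖ * ‖y‖ := (θ (t • y)).le_opNorm y
        _ ≤ C * 1 := mul_le_mul (hbd _ hty) hyn (norm_nonneg y) hC.le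
        _ = C := by norm_num
    have heq : θ y + -(χ y • θ y + f y • fderiv ℝ (⇑χ) y)
        = (1 - χ y) • θ y - f y • fderiv ℝ (⇑χ) y := by
      refine ContinuousLinearMap.ext fun v => ?_
      simp only [ContinuousLinearMap.add_apply, ContinuousLinearMap.neg_apply,
        ContinuousLinearMap.sub_apply, ContinuousLinearMap.coe_smul', ContinuousLinearMap.smul_apply,
        Pi.smul_apply, smul_eq_mul]
      ring
    rw [heq]
    have h1 : ‖(1 - χ y) • θ y‖ ≤ 1 * C := by
      rw [norm_smul (1 - χ y) (θ y), Real.norm_eq_abs, abs_of_nonneg (by linarith [χ.le_one (x := y)])]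
      apply mul_le_mul (by linarith [χ.nonneg (x := y)]) (hbd _ hy) (norm_nonneg _) (by norm_num)
    have h2 : ‖f y • fderiv ℝ (⇑χ) y‖ ≤ C * M := by
      rw [norm_smul (f y) (fderiv ℝ (⇑χ) y), Real.norm_eq_abs]
      exact mul_le_mul hfb (hM y) (norm_nonneg _) hC.le
    calc ‖(1 - χ y) • θ y - f y • fderiv ℝ (⇑χ) y‖
        ≤ ‖(1 - χ y) • θ y‖ + ‖f y • fderiv ℝ (⇑χ) y‖ := norm_sub_le _ _
    _ ≤ 1 * C + C * M := add_le_add h1 h2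
    _ = (1 + M) * C := by ring
end
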